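/- Let G be a graph with fractional chromatic number at most k and average degree d. Then G has a bipartite induced subgraph of average degree at least d/k; consequently G contains a bipartite induced subgraph of minimum degree at least d/(2k). -/

import Mathlib

/-- A set of vertices is stable (independent) if no two of its vertices are adjacent. -/
def SimpleGraph.IsStableSet {V : Type*} (G : SimpleGraph V) (s : Set V) : Prop :=
  ∀ u ∈ s, ∀ v ∈ s, ¬ G.Adj u v

/-- The fractional chromatic number of a finite graph: the infimum of `a / b` over proper
`(a,b)`-colourings, i.e. assignments of `b`-element subsets of `{1,…,a}` to the vertices such
that adjacent vertices receive disjoint subsets. -/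
noncomputable def SimpleGraph.fracChi {V : Type*} [Fintype V] (G : SimpleGraph V) : ℝ :=
  sInf { x : ℝ | ∃ a b : ℕ, 0 < b ∧
    (∃ c : V → Finset (Fin a), (∀ v, (c v).card = b) ∧
      ∀ u v, G.Adj u v → Disjoint (c u) (c v)) ∧ x = (a : ℝ) / b }

private lemma stable_subset {V : Type*} (G : SimpleGraph V) (X Y : Finset V) (hXY : X ⊆ Y)
    (h : G.IsStableSet ↑Y) : G.IsStableSet ↑X :=
  fun u hu v hv => h u (hXY hu) v (hXY hv)

private lemma min_deg_step {V : Type*} [Fintype V] [DecidableEq V] (G : SimpleGraph V)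
    [DecidableRel G.Adj] (t : ℝ) (A B : Finset V) (hAB : Disjoint A B)
    (hA : G.IsStableSet ↑A) (hB : G.IsStableSet ↑B) (hne : (A ∪ B).Nonempty)
    (hE : t * ((A.card : ℝ) + B.card) ≤ ∑ u ∈ A, ∑ w ∈ B, if G.Adj u w then (1:ℝ) else 0) :
    ∃ A' B' : Finset V, Disjoint A' B' ∧ G.IsStableSet ↑A' ∧ G.IsStableSet ↑B' ∧
      (A' ∪ B').Nonempty ∧ ∀ v ∈ A' ∪ B', t ≤ (((A' ∪ B').filter (G.Adj v)).card : ℝ) := by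
  classical
  set g : Finset V × Finset V → ℝ := fun p =>
    (∑ u ∈ p.1, ∑ w ∈ p.2, if G.Adj u w then (1:ℝ) else 0) - t * ((p.1.card : ℝ) + p.2.card)
    with hg
  set Q : Finset (Finset V × Finset V) :=
    (A.powerset ×ˢ B.powerset).filter (fun p => (p.1 ∪ p.2).Nonempty) with hQ
  have hABQ : (A, B) ∈ Q := by
    simp only [hQ, Finset.mem_filter, Finset.mem_product, Finset.mem_powerset]
    exact ⟨⟨le_refl _, le_refl _⟩, hne⟩
  obtain ⟨p, hpQ, hpmax⟩ := Q.exists_max_image g ⟨_, hABQ⟩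
  simp only [hQ, Finset.mem_filter, Finset.mem_product, Finset.mem_powerset] at hpQ
  obtain ⟨⟨hpA, hpB⟩, hpne⟩ := hpQ
  have hg0 : 0 ≤ g p := le_trans (sub_nonneg.2 hE) (hpmax _ hABQ)
  refine ⟨p.1, p.2, hAB.mono hpA hpB, stable_subset G _ _ hpA hA, stable_subset G _ _ hpB hB,
    hpne, ?_⟩
  intro v hv
  by_contra hlt
  push_neg at hlt
  have ht0 : 0 < t := lt_of_le_of_lt (Nat.cast_nonneg _) hlt
  rcases Finset.mem_union.1 hv with hv1 | hv2
  · -- v ∈ p.1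
    have hfilt : (p.1 ∪ p.2).filter (G.Adj v) = p.2.filter (G.Adj v) := by
      rw [Finset.filter_union]
      have h0 : p.1.filter (G.Adj v) = ∅ :=
        Finset.filter_eq_empty_iff.2 fun u hu => hA v (hpA hv1) u (hpA hu)
      rw [h0, Finset.empty_union]
    rw [hfilt] at hlt
    have hD : (∑ w ∈ p.2, if G.Adj v w then (1:ℝ) else 0)
        = ((p.2.filter (G.Adj v)).card : ℝ) := Finset.sum_boole _ _
    have hesplit : (∑ u ∈ p.1, ∑ w ∈ p.2, if G.Adj u w then (1:ℝ) else 0)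
        = (∑ u ∈ p.1.erase v, ∑ w ∈ p.2, if G.Adj u w then (1:ℝ) else 0)
          + ((p.2.filter (G.Adj v)).card : ℝ) := by
      rw [← hD, Finset.sum_erase_add _ _ hv1]
    rcases Finset.eq_empty_or_nonempty (p.1.erase v ∪ p.2) with hemp | hne'
    · have h2 : p.2 = ∅ := (Finset.union_eq_empty.1 hemp).2
      have h1 : p.1 = {v} := by
        have he := (Finset.union_eq_empty.1 hemp).1
        refine Finset.eq_singleton_iff_unique_mem.2 ⟨hv1, fun x hx => ?_⟩
        by_contra hxv
        exact Finset.ne_empty_of_mem (Finset.mem_erase.2 ⟨hxv, hx⟩) he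
      have hgp : g p = -t := by
        have : p = ({v}, (∅ : Finset V)) := Prod.ext h1 h2
        rw [this]
        simp [hg]
      rw [hgp] at hg0
      linarith
    · have hQ' : (p.1.erase v, p.2) ∈ Q := by
        simp only [hQ, Finset.mem_filter, Finset.mem_product, Finset.mem_powerset]
        exact ⟨⟨(Finset.erase_subset _ _).trans hpA, hpB⟩, hne'⟩
      have hle := hpmax _ hQ'
      have hcard : ((p.1.erase v).card : ℝ) = (p.1.card : ℝ) - 1 :=
        Finset.cast_card_erase_of_mem hv1
      simp only [hg] at hle
      rw [hcard] at hle
      linarith [hesplit, hlt, hle]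
  · -- v ∈ p.2
    have hfilt : (p.1 ∪ p.2).filter (G.Adj v) = p.1.filter (G.Adj v) := by
      rw [Finset.filter_union]
      have h0 : p.2.filter (G.Adj v) = ∅ :=
        Finset.filter_eq_empty_iff.2 fun u hu => hB v (hpB hv2) u (hpB hu)
      rw [h0, Finset.union_empty]
    rw [hfilt] at hlt
    have hD : (∑ u ∈ p.1, if G.Adj u v then (1:ℝ) else 0)
        = ((p.1.filter (G.Adj v)).card : ℝ) := by
      have hsw : ∀ u, (if G.Adj u v then (1:ℝ) else 0) = (if G.Adj v u then (1:ℝ) else 0) :=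
        fun u => by simp only [G.adj_comm]
      simp only [hsw]
      exact Finset.sum_boole _ _
    have hesplit : (∑ u ∈ p.1, ∑ w ∈ p.2, if G.Adj u w then (1:ℝ) else 0)
        = (∑ u ∈ p.1, ∑ w ∈ p.2.erase v, if G.Adj u w then (1:ℝ) else 0)
          + ((p.1.filter (G.Adj v)).card : ℝ) := by
      rw [← hD, ← Finset.sum_add_distrib]
      exact Finset.sum_congr rfl fun u _ => (Finset.sum_erase_add _ _ hv2).symm
    rcases Finset.eq_empty_or_nonempty (p.1 ∪ p.2.erase v) with hemp | hne'
    · have h1 : p.1 = ∅ := (Finset.union_eq_empty.1 hemp).1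
      have h2 : p.2 = {v} := by
        have he := (Finset.union_eq_empty.1 hemp).2
        refine Finset.eq_singleton_iff_unique_mem.2 ⟨hv2, fun x hx => ?_⟩
        by_contra hxv
        exact Finset.ne_empty_of_mem (Finset.mem_erase.2 ⟨hxv, hx⟩) he
      have hgp : g p = -t := by
        have : p = ((∅ : Finset V), {v}) := Prod.ext h1 h2
        rw [this]
        simp [hg]
      rw [hgp] at hg0
      linarith
    · have hQ' : (p.1, p.2.erase v) ∈ Q := by
        simp only [hQ, Finset.mem_filter, Finset.mem_product, Finset.mem_powerset]
        exact ⟨⟨hpA, (Finset.erase_subset _ _).trans hpB⟩, hne'⟩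
      have hle := hpmax _ hQ'
      have hcard : ((p.2.erase v).card : ℝ) = (p.2.card : ℝ) - 1 :=
        Finset.cast_card_erase_of_mem hv2
      simp only [hg] at hle
      rw [hcard] at hle
      linarith [hesplit, hlt, hle]

private lemma avg_deg_step {V : Type*} [Fintype V] [DecidableEq V] [Nonempty V]
    (G : SimpleGraph V) [DecidableRel G.Adj] (k' d : ℝ) (hk' : 0 < k') (hdpos : 0 < d)
    (hd : d = 2 * (G.edgeFinset.card : ℝ) / (Fintype.card V))
    (a b : ℕ) (hb : 0 < b) (c : V → Finset (Fin a)) (hcard : ∀ v, (c v).card = b)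
    (hdisj : ∀ u v, G.Adj u v → Disjoint (c u) (c v))
    (hab : (a : ℝ) ≤ k' * b) :
    ∃ A B : Finset V, Disjoint A B ∧ G.IsStableSet ↑A ∧ G.IsStableSet ↑B ∧
      (A ∪ B).Nonempty ∧
      d / k' ≤ 2 * (∑ u ∈ A, ((B.filter (G.Adj u)).card : ℝ)) / ((A.card : ℝ) + B.card) := by
  classical
  have hnV : 0 < Fintype.card V := Fintype.card_pos
  have hn : (0:ℝ) < Fintype.card V := by exact_mod_cast hnV
  have hbR : (0:ℝ) < b := by exact_mod_cast hb
  have hdn : d * (Fintype.card V : ℝ) = 2 * G.edgeFinset.card := by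
    rw [hd]; field_simp
  have hm : (0:ℝ) < G.edgeFinset.card := by
    have := mul_pos hdpos hn; linarith
  set S : Fin a → Finset V := fun i => Finset.univ.filter (fun v => i ∈ c v) with hS
  have hmemS : ∀ i v, v ∈ S i ↔ i ∈ c v := by intro i v; simp [hS]
  have hstab : ∀ i, G.IsStableSet ↑(S i) := by
    intro i u hu v hv hadj
    exact Finset.disjoint_left.1 (hdisj u v hadj) ((hmemS i u).1 hu) ((hmemS i v).1 hv)
  have hinner : ∀ u : V, ∑ j : Fin a, (((S j).filter (G.Adj u)).card : ℝ)
      = (b : ℝ) * G.degree u := by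
    intro u
    have h1 : ∀ j : Fin a, (((S j).filter (G.Adj u)).card : ℝ)
        = ∑ v ∈ Finset.univ.filter (G.Adj u), if j ∈ c v then (1:ℝ) else 0 := by
      intro j
      have heq : (S j).filter (G.Adj u)
          = (Finset.univ.filter (G.Adj u)).filter (fun v => j ∈ c v) := by
        ext v; simp [hS, and_comm]
      rw [heq]
      exact (Finset.sum_boole _ _).symm
    simp only [h1]
    rw [Finset.sum_comm]
    have h2 : ∀ v : V, (∑ j : Fin a, if j ∈ c v then (1:ℝ) else 0) = (b : ℝ) := by
      intro v
      rw [Finset.sum_ite_mem, Finset.univ_inter, Finset.sum_const, nsmul_eq_mul, hcard v,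
        mul_one]
    simp only [h2]
    rw [Finset.sum_const, nsmul_eq_mul]
    have h3 : (Finset.univ.filter (G.Adj u)).card = G.degree u := by
      rw [← SimpleGraph.neighborFinset_eq_filter, SimpleGraph.card_neighborFinset_eq_degree]
    rw [h3]; ring
  have hsum1 : ∑ i : Fin a, ∑ j : Fin a, (∑ u ∈ S i, (((S j).filter (G.Adj u)).card : ℝ))
      = 2 * G.edgeFinset.card * b ^ 2 := by
    have h1 : ∀ i : Fin a, ∑ j : Fin a, ∑ u ∈ S i, (((S j).filter (G.Adj u)).card : ℝ)
        = ∑ u ∈ S i, (b:ℝ) * G.degree u := by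
      intro i; rw [Finset.sum_comm]; exact Finset.sum_congr rfl fun u _ => hinner u
    simp only [h1]
    have h3 : ∀ i : Fin a, (∑ u ∈ S i, (b:ℝ) * G.degree u)
        = ∑ u : V, if i ∈ c u then (b:ℝ) * G.degree u else 0 := by
      intro i; simp only [hS]; exact Finset.sum_filter _ _
    simp only [h3]
    rw [Finset.sum_comm]
    have h4 : ∀ u : V, (∑ i : Fin a, if i ∈ c u then (b:ℝ) * G.degree u else 0)
        = (b:ℝ) * ((b:ℝ) * G.degree u) := by
      intro u
      rw [Finset.sum_ite_mem, Finset.univ_inter, Finset.sum_const, nsmul_eq_mul, hcard u]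
    simp only [h4]
    rw [← Finset.mul_sum, ← Finset.mul_sum]
    have h5 : ∑ u : V, (G.degree u : ℝ) = 2 * G.edgeFinset.card := by
      norm_cast
      exact G.sum_degrees_eq_twice_card_edges
    rw [h5]; ring
  have hsum2 : ∑ i : Fin a, ((S i).card : ℝ) = (Fintype.card V : ℝ) * b := by
    have h1 : ∀ i : Fin a, ((S i).card : ℝ) = ∑ v : V, if i ∈ c v then (1:ℝ) else 0 := by
      intro i; simp only [Finset.sum_boole, hS]
    simp only [h1]
    rw [Finset.sum_comm]
    have h2 : ∀ v : V, (∑ i : Fin a, if i ∈ c v then (1:ℝ) else 0) = (b:ℝ) := by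
      intro v
      rw [Finset.sum_ite_mem, Finset.univ_inter, Finset.sum_const, nsmul_eq_mul, hcard v,
        mul_one]
    simp only [h2, Finset.sum_const, nsmul_eq_mul, Finset.card_univ]
  set t : ℝ := d / (2 * k') with htdef
  have ht0 : 0 < t := div_pos hdpos (by linarith)
  have claim : ∃ i j : Fin a, 0 < ((S i).card : ℝ) + ((S j \ S i).card : ℝ) ∧
      t * (((S i).card : ℝ) + ((S j \ S i).card : ℝ))
        ≤ ∑ u ∈ S i, (((S j).filter (G.Adj u)).card : ℝ) := by
    by_contra hcon
    push_neg at hcon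
    have hub : ∀ p : Fin a × Fin a,
        (∑ u ∈ S p.1, (((S p.2).filter (G.Adj u)).card : ℝ))
          ≤ t * (((S p.1).card : ℝ) + ((S p.2 \ S p.1).card : ℝ)) := by
      intro p
      by_cases hpos : 0 < ((S p.1).card : ℝ) + ((S p.2 \ S p.1).card : ℝ)
      · exact (hcon p.1 p.2 hpos).le
      · push_neg at hpos
        have hc1 : ((S p.1).card : ℝ) = 0 := by
          have h1 : (0:ℝ) ≤ ((S p.1).card : ℝ) := Nat.cast_nonneg _
          have h2 : (0:ℝ) ≤ ((S p.2 \ S p.1).card : ℝ) := Nat.cast_nonneg _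
          linarith
        have hS1 : S p.1 = ∅ := Finset.card_eq_zero.1 (by exact_mod_cast hc1)
        rw [hS1]
        simp only [Finset.sum_empty, Finset.card_empty, Nat.cast_zero, zero_add]
        have h2 : (0:ℝ) ≤ ((S p.2 \ ∅).card : ℝ) := Nat.cast_nonneg _
        nlinarith
    have hLHS : ∑ p : Fin a × Fin a, (∑ u ∈ S p.1, (((S p.2).filter (G.Adj u)).card : ℝ))
        = 2 * G.edgeFinset.card * b ^ 2 := by
      rw [Fintype.sum_prod_type]
      exact hsum1
    have hex : ∃ p : Fin a × Fin a,
        (∑ u ∈ S p.1, (((S p.2).filter (G.Adj u)).card : ℝ)) ≠ 0 := by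
      by_contra hz
      push_neg at hz
      have hzz : ∑ p : Fin a × Fin a,
          (∑ u ∈ S p.1, (((S p.2).filter (G.Adj u)).card : ℝ)) = 0 :=
        Finset.sum_eq_zero fun p _ => hz p
      rw [hLHS] at hzz
      nlinarith [mul_pos hm (pow_pos hbR 2)]
    obtain ⟨p0, hp0⟩ := hex
    have hp0pos : 0 < ((S p0.1).card : ℝ) + ((S p0.2 \ S p0.1).card : ℝ) := by
      rcases Finset.eq_empty_or_nonempty (S p0.1) with h | h
      · exact absurd (by rw [h]; simp) hp0
      · have h1 : 0 < (S p0.1).card := Finset.card_pos.2 h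
        have h1' : (0:ℝ) < (S p0.1).card := by exact_mod_cast h1
        have h2 : (0:ℝ) ≤ ((S p0.2 \ S p0.1).card : ℝ) := Nat.cast_nonneg _
        linarith
    have hlt : ∑ p : Fin a × Fin a, (∑ u ∈ S p.1, (((S p.2).filter (G.Adj u)).card : ℝ))
        < ∑ p : Fin a × Fin a, t * (((S p.1).card : ℝ) + ((S p.2 \ S p.1).card : ℝ)) :=
      Finset.sum_lt_sum (fun p _ => hub p)
        ⟨p0, Finset.mem_univ _, hcon p0.1 p0.2 hp0pos⟩
    have hY : ∑ p : Fin a × Fin a, t * (((S p.1).card : ℝ) + ((S p.2 \ S p.1).card : ℝ))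
        ≤ ∑ p : Fin a × Fin a, t * (((S p.1).card : ℝ) + ((S p.2).card : ℝ)) := by
      refine Finset.sum_le_sum fun p _ => ?_
      have hcc : ((S p.2 \ S p.1).card : ℝ) ≤ ((S p.2).card : ℝ) := by
        exact_mod_cast Finset.card_le_card Finset.sdiff_subset
      exact mul_le_mul_of_nonneg_left (by linarith) ht0.le
    have hYval : ∑ p : Fin a × Fin a, (((S p.1).card : ℝ) + ((S p.2).card : ℝ))
        = 2 * a * ((Fintype.card V : ℝ) * b) := by
      rw [Finset.sum_add_distrib]
      have e1 : ∑ p : Fin a × Fin a, ((S p.1).card : ℝ)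
          = (a:ℝ) * ((Fintype.card V : ℝ) * b) := by
        rw [Fintype.sum_prod_type]
        simp only [Finset.sum_const, Finset.card_univ, Fintype.card_fin, nsmul_eq_mul]
        rw [← Finset.mul_sum, hsum2]
      have e2 : ∑ p : Fin a × Fin a, ((S p.2).card : ℝ)
          = (a:ℝ) * ((Fintype.card V : ℝ) * b) := by
        rw [Fintype.sum_prod_type]
        simp only [hsum2, Finset.sum_const, Finset.card_univ, Fintype.card_fin, nsmul_eq_mul]
      rw [e1, e2]; ring
    have hsum3 : ∑ p : Fin a × Fin a, t * (((S p.1).card : ℝ) + ((S p.2).card : ℝ))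
        = t * (2 * a * ((Fintype.card V : ℝ) * b)) := by
      rw [← Finset.mul_sum, hYval]
    have hfinal : t * (2 * a * ((Fintype.card V : ℝ) * b)) ≤ 2 * G.edgeFinset.card * b ^ 2 := by
      have h1 : t * (2 * a * ((Fintype.card V : ℝ) * b))
          = (d * (Fintype.card V : ℝ)) * ((a:ℝ) * b) / k' := by
        rw [htdef]; field_simp
      rw [h1, hdn, div_le_iff₀ hk']
      have h2 : (a:ℝ) * b ≤ (k' * b) * b := mul_le_mul_of_nonneg_right hab hbR.le
      nlinarith
    rw [hLHS] at hlt
    rw [hsum3] at hY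
    linarith
  obtain ⟨i, j, hYpos, hXY⟩ := claim
  refine ⟨S i, S j \ S i, Finset.disjoint_sdiff, hstab i,
    stable_subset G _ _ Finset.sdiff_subset (hstab j), ?_, ?_⟩
  · have h1 : 0 < (S i).card + (S j \ S i).card := by exact_mod_cast hYpos
    have h2 : 0 < (S i ∪ (S j \ S i)).card := by
      rwa [Finset.card_union_of_disjoint Finset.disjoint_sdiff]
    exact Finset.card_pos.1 h2
  · have hEq : ∑ u ∈ S i, (((S j \ S i).filter (G.Adj u)).card : ℝ)
        = ∑ u ∈ S i, (((S j).filter (G.Adj u)).card : ℝ) := by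
      refine Finset.sum_congr rfl fun u hu => ?_
      have hfe : (S j \ S i).filter (G.Adj u) = (S j).filter (G.Adj u) := by
        ext w
        simp only [Finset.mem_filter, Finset.mem_sdiff]
        constructor
        · rintro ⟨⟨hw1, _⟩, hw2⟩; exact ⟨hw1, hw2⟩
        · rintro ⟨hw1, hw2⟩
          refine ⟨⟨hw1, fun hwi => ?_⟩, hw2⟩
          exact Finset.disjoint_left.1 (hdisj u w hw2) ((hmemS i u).1 hu) ((hmemS i w).1 hwi)
      rw [hfe]
    rw [hEq, le_div_iff₀ hYpos]
    have h2t : d / k' = 2 * t := by rw [htdef]; field_simp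
    rw [h2t]
    nlinarith [hXY]

/-- Any graph with fractional chromatic number at most `k` and average degree `d` has a
bipartite induced subgraph (two disjoint stable sets `A`, `B`, edges of the induced subgraph
being those between `A` and `B`) of average degree at least `d / k`; consequently it contains
a bipartite induced subgraph of minimum degree at least `d / (2k)`. -/
theorem bipartite_induced_of_fracChi {V : Type*} [Fintype V] [DecidableEq V] [Nonempty V]
    (G : SimpleGraph V) [DecidableRel G.Adj] (k d : ℝ) (hk : 0 < k)
    (hchi : G.fracChi ≤ k)
    (hd : d = 2 * (G.edgeFinset.card : ℝ) / (Fintype.card V)) :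
    (∃ A B : Finset V, Disjoint A B ∧ G.IsStableSet ↑A ∧ G.IsStableSet ↑B ∧
        (A ∪ B).Nonempty ∧
        d / k ≤ 2 * (∑ a ∈ A, ((B.filter (G.Adj a)).card : ℝ)) / (A.card + B.card)) ∧
      (∃ A B : Finset V, Disjoint A B ∧ G.IsStableSet ↑A ∧ G.IsStableSet ↑B ∧
        (A ∪ B).Nonempty ∧
        ∀ v ∈ A ∪ B, d / (2 * k) ≤ (((A ∪ B).filter (G.Adj v)).card : ℝ)) := by
  classical
  obtain ⟨v0⟩ := ‹Nonempty V›
  have hsingle : G.IsStableSet (↑({v0} : Finset V)) := by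
    intro u hu v hv hadj
    simp only [Finset.coe_singleton, Set.mem_singleton_iff] at hu hv
    subst hu; subst hv; exact G.loopless.irrefl _ hadj
  have hempty : G.IsStableSet (↑(∅ : Finset V)) := by
    intro u hu; simp at hu
  have hd0 : 0 ≤ d := by rw [hd]; positivity
  rcases eq_or_lt_of_le hd0 with hdz | hdpos
  · constructor
    · refine ⟨{v0}, ∅, Finset.disjoint_empty_right _, hsingle, hempty, by simp, ?_⟩
      rw [← hdz]
      simp
    · refine ⟨{v0}, ∅, Finset.disjoint_empty_right _, hsingle, hempty, by simp, ?_⟩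
      intro v hv
      rw [← hdz, zero_div]
      positivity
  · have hSne : {x : ℝ | ∃ a b : ℕ, 0 < b ∧
        (∃ c : V → Finset (Fin a), (∀ v, (c v).card = b) ∧
          ∀ u v, G.Adj u v → Disjoint (c u) (c v)) ∧ x = (a : ℝ) / b}.Nonempty := by
      refine ⟨(Fintype.card V : ℝ) / 1, Fintype.card V, 1, one_pos,
        ⟨fun v => {Fintype.equivFin V v}, fun v => rfl, fun u v huv => ?_⟩, by norm_num⟩
      simp only [Finset.disjoint_singleton]
      exact fun h => huv.ne ((Fintype.equivFin V).injective h)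
    have hstep : ∀ ε : ℝ, 0 < ε → ∃ A B : Finset V, Disjoint A B ∧ G.IsStableSet ↑A ∧
        G.IsStableSet ↑B ∧ (A ∪ B).Nonempty ∧
        d / (k + ε) ≤ 2 * (∑ u ∈ A, ((B.filter (G.Adj u)).card : ℝ)) / ((A.card:ℝ) + B.card) := by
      intro ε hε
      obtain ⟨x, hx, hxlt⟩ := Real.lt_sInf_add_pos hSne hε
      obtain ⟨a, b, hb, ⟨c, hcard, hdisjc⟩, rfl⟩ := hx
      have hbR : (0:ℝ) < b := by exact_mod_cast hb
      have hchi' : sInf {x : ℝ | ∃ a b : ℕ, 0 < b ∧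
          (∃ c : V → Finset (Fin a), (∀ v, (c v).card = b) ∧
            ∀ u v, G.Adj u v → Disjoint (c u) (c v)) ∧ x = (a : ℝ) / b} ≤ k := hchi
      have hxk : (a:ℝ)/b < k + ε := lt_of_lt_of_le hxlt (add_le_add_left hchi' ε)
      have hab : (a:ℝ) ≤ (k+ε)*b := by
        rw [div_lt_iff₀ hbR] at hxk
        linarith
      exact avg_deg_step G (k+ε) d (by linarith) hdpos hd a b hb c hcard hdisjc hab
    set r : Finset V × Finset V → ℝ := fun p =>
      2 * (∑ u ∈ p.1, ((p.2.filter (G.Adj u)).card : ℝ)) / ((p.1.card : ℝ) + p.2.card) with hr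
    set P : Finset (Finset V × Finset V) := Finset.univ.filter (fun p =>
      Disjoint p.1 p.2 ∧ G.IsStableSet ↑p.1 ∧ G.IsStableSet ↑p.2 ∧ (p.1 ∪ p.2).Nonempty)
      with hP
    have hPne : P.Nonempty := by
      refine ⟨({v0}, ∅), ?_⟩
      simp only [hP, Finset.mem_filter, Finset.mem_univ, true_and]
      exact ⟨Finset.disjoint_empty_right _, hsingle, hempty, by simp⟩
    have hMε : ∀ ε : ℝ, 0 < ε → d / (k + ε) ≤ P.sup' hPne r := by
      intro ε hε
      obtain ⟨A, B, h1, h2, h3, h4, h5⟩ := hstep ε hε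
      have hmem : (A, B) ∈ P := by
        simp only [hP, Finset.mem_filter, Finset.mem_univ, true_and]
        exact ⟨h1, h2, h3, h4⟩
      exact le_trans h5 (Finset.le_sup' r hmem)
    have hM0 : 0 < P.sup' hPne r :=
      lt_of_lt_of_le (div_pos hdpos (by linarith)) (hMε 1 one_pos)
    have hdM : d ≤ P.sup' hPne r * k := by
      refine le_of_forall_pos_le_add fun δ hδ => ?_
      have h := hMε (δ / P.sup' hPne r) (div_pos hδ hM0)
      rw [div_le_iff₀ (by positivity : (0:ℝ) < k + δ / P.sup' hPne r)] at h
      have hexp : P.sup' hPne r * (k + δ / P.sup' hPne r) = P.sup' hPne r * k + δ := by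
        field_simp
      rw [hexp] at h
      exact h
    have hdk : d / k ≤ P.sup' hPne r := by rw [div_le_iff₀ hk]; exact hdM
    obtain ⟨p, hpP, hpM⟩ := Finset.exists_mem_eq_sup' hPne r
    simp only [hP, Finset.mem_filter, Finset.mem_univ, true_and] at hpP
    obtain ⟨hp1, hp2, hp3, hp4⟩ := hpP
    rw [hpM] at hdk
    have hfirst : d / k ≤
        2 * (∑ u ∈ p.1, ((p.2.filter (G.Adj u)).card : ℝ)) / ((p.1.card : ℝ) + p.2.card) := by
      simpa only [hr] using hdk
    refine ⟨⟨p.1, p.2, hp1, hp2, hp3, hp4, hfirst⟩, ?_⟩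
    have hs : (0:ℝ) < (p.1.card : ℝ) + p.2.card := by
      have h1 : 0 < (p.1 ∪ p.2).card := Finset.card_pos.2 hp4
      rw [Finset.card_union_of_disjoint hp1] at h1
      exact_mod_cast h1
    have hEX : d / (2*k) * ((p.1.card : ℝ) + p.2.card)
        ≤ ∑ u ∈ p.1, ((p.2.filter (G.Adj u)).card : ℝ) := by
      rw [le_div_iff₀ hs] at hfirst
      have hk2 : (0:ℝ) < 2*k := by linarith
      rw [div_mul_eq_mul_div, div_le_iff₀ hk2]
      rw [div_mul_eq_mul_div, div_le_iff₀ hk] at hfirst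
      linarith
    have hE2 : d / (2*k) * ((p.1.card : ℝ) + p.2.card)
        ≤ ∑ u ∈ p.1, ∑ w ∈ p.2, if G.Adj u w then (1:ℝ) else 0 := by
      simpa only [Finset.sum_boole] using hEX
    exact min_deg_step G (d/(2*k)) p.1 p.2 hp1 hp2 hp3 hp4 hE2
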